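/- For every integer n ≥ 1 and every constant C₁ > 0 there exists a constant C > 0 depending only on n and C₁ with the following property: for all t ∈ (0, 1], all d ≥ 0, and all real numbers h > 0 and h_N such that |h − h_N| ≤ C₁ · t⁴ · exp(−d²/(5t)) and (1/2) (4πt)^{−n/2} exp(−d²/(4t)) ≤ h_N ≤ 2 (4πt)^{−n/2} exp(−d²/(4t)), one has |ln(h/h_N)| · h ≤ C · t⁴. -/

import Mathlib

open Real

/-- Pointwise estimate (3.5): if `|h − h_N| ≤ C₁ t⁴ exp(−d²/(5t))` and
`h_N` is comparable to the Gaussian `(4πt)^{−n/2} exp(−d²/(4t))` within a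
factor `2`, then `|ln(h/h_N)| · h ≤ C t⁴`. -/
theorem log_ratio_heat_kernel_parametrix_estimate
    (n : ℕ) (hn : 1 ≤ n) (C₁ : ℝ) (hC₁ : 0 < C₁) :
    ∃ C > (0 : ℝ), ∀ t ∈ Set.Ioc (0 : ℝ) 1, ∀ d : ℝ, 0 ≤ d →
      ∀ h h_N : ℝ, 0 < h →
        |h - h_N| ≤ C₁ * t ^ 4 * Real.exp (-d ^ 2 / (5 * t)) →
        (1 / 2) * (4 * π * t) ^ (-(n : ℝ) / 2) * Real.exp (-d ^ 2 / (4 * t)) ≤ h_N →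
        h_N ≤ 2 * (4 * π * t) ^ (-(n : ℝ) / 2) * Real.exp (-d ^ 2 / (4 * t)) →
        |Real.log (h / h_N)| * h ≤ C * t ^ 4 := by
  have hπ : (0:ℝ) < π := Real.pi_pos
  refine ⟨C₁ + 2 * C₁ ^ 2 * (4 * π) ^ ((n : ℝ) / 2), by positivity, ?_⟩
  rintro t ⟨ht0, ht1⟩ d hd h h_N hh hdiff hlow hup
  set E : ℝ := Real.exp (-d ^ 2 / (5 * t)) with hE
  set F : ℝ := Real.exp (-d ^ 2 / (4 * t)) with hF
  set A : ℝ := (4 * π * t) ^ (-(n : ℝ) / 2) with hA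
  set B : ℝ := (4 * π * t) ^ ((n : ℝ) / 2) with hB
  have hbase : (0:ℝ) < 4 * π * t := by positivity
  have hApos : 0 < A := Real.rpow_pos_of_pos hbase _
  have hBpos : 0 < B := Real.rpow_pos_of_pos hbase _
  have hEpos : 0 < E := Real.exp_pos _
  have hFpos : 0 < F := Real.exp_pos _
  have hN0 : 0 < h_N := lt_of_lt_of_le (by positivity) hlow
  have hAB : A * B = 1 := by
    rw [hA, hB, ← Real.rpow_add hbase, neg_div, neg_add_cancel, Real.rpow_zero]
  have hE1 : E ≤ 1 := Real.exp_le_one_iff.2 (by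
    apply div_nonpos_of_nonpos_of_nonneg
    · nlinarith [sq_nonneg d]
    · positivity)
  have hEF : E ^ 2 ≤ F := by
    rw [hE, hF, sq, ← Real.exp_add, Real.exp_le_exp, ← add_div,
      div_le_div_iff₀ (by positivity) (by positivity)]
    nlinarith [mul_nonneg (sq_nonneg d) ht0.le]
  have hBle : B ≤ (4 * π) ^ ((n : ℝ) / 2) := by
    apply Real.rpow_le_rpow hbase.le (by nlinarith) (by positivity)
  have ht4 : t ^ 8 ≤ t ^ 4 := pow_le_pow_of_le_one ht0.le ht1 (by norm_num)
  have hFle : F ≤ 2 * h_N * B := by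
    have h1 : A * F ≤ 2 * h_N := by linarith
    calc F = (A * F) * B := by rw [mul_comm A F, mul_assoc, hAB, mul_one]
      _ ≤ (2 * h_N) * B := by
        exact mul_le_mul_of_nonneg_right h1 hBpos.le
      _ = 2 * h_N * B := by ring
  set δ : ℝ := C₁ * t ^ 4 * E with hδdef
  have hδpos : 0 < δ := by positivity
  have hδle : δ ≤ C₁ * t ^ 4 := by
    have : C₁ * t ^ 4 * E ≤ C₁ * t ^ 4 * 1 :=
      mul_le_mul_of_nonneg_left hE1 (by positivity)
    simpa using this
  rcases le_or_gt h h_N with hc | hc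
  · -- h ≤ h_N
    have hr : h / h_N ≤ 1 := div_le_one_of_le₀ hc hN0.le
    have habs : |Real.log (h / h_N)| = Real.log (h_N / h) := by
      rw [abs_of_nonpos (Real.log_nonpos (by positivity) hr), ← Real.log_inv, inv_div]
    have hlog : Real.log (h_N / h) ≤ h_N / h - 1 :=
      Real.log_le_sub_one_of_pos (by positivity)
    have h2 : Real.log (h_N / h) * h ≤ h_N - h := by
      have := mul_le_mul_of_nonneg_right hlog hh.le
      calc Real.log (h_N / h) * h ≤ (h_N / h - 1) * h := this
        _ = h_N - h := by field_simp
    have h3 : h_N - h ≤ δ := by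
      have := neg_abs_le (h - h_N)
      linarith [hdiff]
    rw [habs]
    have hnn : (0:ℝ) ≤ 2 * C₁ ^ 2 * (4 * π) ^ ((n : ℝ) / 2) * t ^ 4 := by positivity
    have hexp : (C₁ + 2 * C₁ ^ 2 * (4 * π) ^ ((n : ℝ) / 2)) * t ^ 4
        = C₁ * t ^ 4 + 2 * C₁ ^ 2 * (4 * π) ^ ((n : ℝ) / 2) * t ^ 4 := by ring
    linarith
  · -- h_N < h
    have hr : 1 ≤ h / h_N := (one_le_div hN0).2 hc.le
    have habs : |Real.log (h / h_N)| = Real.log (h / h_N) :=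
      abs_of_nonneg (Real.log_nonneg hr)
    have hlog : Real.log (h / h_N) ≤ h / h_N - 1 :=
      Real.log_le_sub_one_of_pos (by positivity)
    have h1 : h - h_N ≤ δ := le_trans (le_abs_self _) hdiff
    have hhle : h ≤ h_N + δ := by linarith
    -- multiply through by h_N
    have h2 : Real.log (h / h_N) * h * h_N ≤ (h - h_N) * h := by
      have := mul_le_mul_of_nonneg_right hlog (by positivity : (0:ℝ) ≤ h * h_N)
      calc Real.log (h / h_N) * h * h_N = Real.log (h / h_N) * (h * h_N) := by ring
        _ ≤ (h / h_N - 1) * (h * h_N) := this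
        _ = (h - h_N) * h := by field_simp
    have h3 : (h - h_N) * h ≤ δ * (h_N + δ) := by
      apply mul_le_mul h1 hhle hh.le hδpos.le
    have hδsq : δ ^ 2 ≤ 2 * C₁ ^ 2 * (4 * π) ^ ((n : ℝ) / 2) * t ^ 4 * h_N := by
      calc δ ^ 2 = C₁ ^ 2 * t ^ 8 * E ^ 2 := by rw [hδdef]; ring
        _ ≤ C₁ ^ 2 * t ^ 4 * E ^ 2 := by gcongr
        _ ≤ C₁ ^ 2 * t ^ 4 * F := by gcongr
        _ ≤ C₁ ^ 2 * t ^ 4 * (2 * h_N * B) := by gcongr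
        _ = C₁ ^ 2 * B * (t ^ 4 * (2 * h_N)) := by ring
        _ ≤ C₁ ^ 2 * (4 * π) ^ ((n : ℝ) / 2) * (t ^ 4 * (2 * h_N)) := by gcongr
        _ = 2 * C₁ ^ 2 * (4 * π) ^ ((n : ℝ) / 2) * t ^ 4 * h_N := by ring
    have h4 : Real.log (h / h_N) * h * h_N ≤
        (C₁ + 2 * C₁ ^ 2 * (4 * π) ^ ((n : ℝ) / 2)) * t ^ 4 * h_N := by
      have hδhN : δ * h_N ≤ C₁ * t ^ 4 * h_N :=
        mul_le_mul_of_nonneg_right hδle hN0.le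
      have e1 : δ * (h_N + δ) = δ * h_N + δ ^ 2 := by ring
      have e2 : (C₁ + 2 * C₁ ^ 2 * (4 * π) ^ ((n : ℝ) / 2)) * t ^ 4 * h_N
          = C₁ * t ^ 4 * h_N + 2 * C₁ ^ 2 * (4 * π) ^ ((n : ℝ) / 2) * t ^ 4 * h_N := by ring
      linarith
    rw [habs]
    exact le_of_mul_le_mul_right (by linarith) hN0
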